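/- There exists a constant C_d > 0, depending only on the dimension d, such that for every compact set X ⊆ ℝ^d that is lower Ahlfors (d−1)-regular at scale η_X > 0 with constant κ_X, and every s > 0: |X + B_s(0)| ≤ (C_d/κ_X) · H^{d−1}(X) · s · (1 + s^{d−1}/η_X^{d−1}), where |·| denotes Lebesgue measure and X + B_s(0) is the open s-neighborhood of X. -/

import Mathlib

open MeasureTheory Set Filter
open scoped ENNReal NNReal Classical Pointwise

noncomputable section

/-- The eigenvalue/singular-value sequence of an operator, listed with multiplicity:
`eigSeq S n = inf {‖S - S₀‖ : rank S₀ < n+1}` (so `eigSeq S (k-1)` is the paper's `λ_k`). -/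
def eigSeq {H : Type*} [NormedAddCommGroup H] [NormedSpace ℂ H] (S : H →L[ℂ] H) (n : ℕ) : ℝ :=
  sInf {r : ℝ | ∃ S₀ : H →L[ℂ] H,
    Module.rank ℂ (LinearMap.range (S₀ : H →ₗ[ℂ] H)) < ((n + 1 : ℕ) : Cardinal) ∧ r = ‖S - S₀‖}

/-- `X` is lower Ahlfors `(d-1)`-regular at scale `η` with constant `κ`. -/
def LowerAhlfors (d : ℕ) (X : Set (EuclideanSpace ℝ (Fin d))) (η κ : ℝ) : Prop :=
  ∀ x ∈ X, ∀ r : ℝ, 0 < r → r ≤ η →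
    ENNReal.ofReal (κ * r ^ ((d : ℝ) - 1)) ≤ μH[(d : ℝ) - 1] (X ∩ Metric.ball x r)

/-- `X` is maximally Ahlfors regular with constant `κ`: lower Ahlfors `(d-1)`-regular at the
scale `H^{d-1}(X)^{1/(d-1)}`. -/
def MaxAhlfors (d : ℕ) (X : Set (EuclideanSpace ℝ (Fin d))) (κ : ℝ) : Prop :=
  ∀ x ∈ X, ∀ r : ℝ, 0 < r →
    ENNReal.ofReal r ≤ (μH[(d : ℝ) - 1] X) ^ (1 / ((d : ℝ) - 1)) →
    ENNReal.ofReal (κ * r ^ ((d : ℝ) - 1)) ≤ μH[(d : ℝ) - 1] (X ∩ Metric.ball x r)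

/-- Membership in the lattice `L⁻¹ ℤ^d`. -/
def latticePt (d : ℕ) (L : ℝ) (x : EuclideanSpace ℝ (Fin d)) : Prop :=
  ∀ i, ∃ k : ℤ, x i = k / L

/-- The discretization `E_L = L⁻¹ℤ^d ∩ E` of a set `E ⊆ ℝ^d` at resolution `L`. -/
def discretization (d : ℕ) (L : ℝ) (E : Set (EuclideanSpace ℝ (Fin d))) :
    Set (EuclideanSpace ℝ (Fin d)) :=
  {x | x ∈ E ∧ latticePt d L x}

open Metric

lemma key_real_aux (d : ℕ) (hd : 1 ≤ d) (η s : ℝ) (hη : 0 < η) (hs : 0 < s) :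
    s * s ^ ((d:ℝ)-1) ≤
      2 ^ (d:ℝ) * (s * ((1 + s ^ ((d:ℝ)-1) / η ^ ((d:ℝ)-1)) * (min (s/2) η) ^ ((d:ℝ)-1))) := by
  set p : ℝ := (d:ℝ) - 1 with hp
  have hp0 : 0 ≤ p := by
    have : (1:ℝ) ≤ (d:ℝ) := by exact_mod_cast hd
    simp [hp]; linarith
  have hX : 0 ≤ s ^ p / η ^ p := by positivity
  have hTD : (0:ℝ) < 2 ^ (d:ℝ) := by positivity
  have h1TD : (1:ℝ) ≤ 2 ^ (d:ℝ) := Real.one_le_rpow one_le_two (by positivity)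
  rcases le_total (s/2) η with h | h
  · rw [min_eq_left h]
    have hdiv : (s/2) ^ p = s ^ p / 2 ^ p := Real.div_rpow hs.le (by norm_num : (0:ℝ) ≤ 2) p
    rw [hdiv]
    have h2 : (2:ℝ) ^ p ≤ 2 ^ (d:ℝ) :=
      Real.rpow_le_rpow_of_exponent_le one_le_two (by rw [hp]; linarith)
    have htp : (0:ℝ) < 2 ^ p := by positivity
    have hsp : (0:ℝ) < s ^ p := Real.rpow_pos_of_pos hs p
    set q : ℝ := s ^ p / 2 ^ p with hq
    have hq0 : 0 < q := by positivity
    have hspq : s ^ p = 2 ^ p * q := by rw [hq, mul_div_assoc', eq_div_iff htp.ne', mul_comm]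
    rw [hspq]
    have hterm : (0:ℝ) ≤ 2 ^ (d:ℝ) * (s * ((2 ^ p * q / η ^ p) * q)) := by positivity
    nlinarith [mul_nonneg (mul_nonneg hs.le hq0.le) (sub_nonneg.2 h2), hterm]
  · rw [min_eq_right h]
    have hηp : (0:ℝ) < η ^ p := Real.rpow_pos_of_pos hη p
    have hsp : (0:ℝ) < s ^ p := Real.rpow_pos_of_pos hs p
    have : (1 + s ^ p / η ^ p) * η ^ p = η ^ p + s ^ p := by field_simp
    rw [this]
    nlinarith [mul_nonneg hs.le hηp.le, mul_pos hs hsp,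
      mul_nonneg (sub_nonneg.2 h1TD) (mul_nonneg hs.le (by positivity : (0:ℝ) ≤ η ^ p + s ^ p))]

/-- **Lemma 2.1.** Volume bound for neighborhoods of lower Ahlfors regular compact sets:
`|X + B_s(0)| ≤ (C_d/κ_X) · H^{d-1}(X) · s · (1 + s^{d-1}/η_X^{d-1})`. -/
theorem stmt_7 (d : ℕ) :
    ∃ C : ℝ, 0 < C ∧
      ∀ (X : Set (EuclideanSpace ℝ (Fin d))) (η κ s : ℝ),
        IsCompact X → 0 < η → 0 < κ → LowerAhlfors d X η κ → 0 < s →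
        volume (X + Metric.ball (0 : EuclideanSpace ℝ (Fin d)) s) ≤
          ENNReal.ofReal (C / κ * s * (1 + s ^ ((d : ℝ) - 1) / η ^ ((d : ℝ) - 1))) *
            μH[(d : ℝ) - 1] X := by
  rcases Nat.eq_zero_or_pos d with hd | hd
  · subst hd
    refine ⟨1, one_pos, ?_⟩
    intro X η κ s hX hη hκ hA hs
    rcases eq_empty_or_nonempty X with rfl | ⟨x, hx⟩
    · simp
    · have h1 : μH[((0:ℕ):ℝ) - 1] X = ∞ := by
        rcases Measure.hausdorffMeasure_zero_or_top
            (show ((0:ℕ):ℝ) - 1 < 0 by norm_num) X with h | h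
        · exfalso
          have h2 := Measure.one_le_hausdorffMeasure_zero_of_nonempty (X := EuclideanSpace ℝ (Fin 0)) ⟨x, hx⟩
          rw [h] at h2; simp at h2
        · exact h
      rw [h1, ENNReal.mul_top]
      · exact le_top
      · have : (0:ℝ) < 1 / κ * s * (1 + s ^ (((0:ℕ):ℝ) - 1) / η ^ (((0:ℕ):ℝ) - 1)) := by
          positivity
        exact (ENNReal.ofReal_pos.2 this).ne'
  · haveI : Nontrivial (EuclideanSpace ℝ (Fin d)) :=
      Module.nontrivial_of_finrank_pos (R := ℝ)
        (by rw [finrank_euclideanSpace_fin]; omega)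
    set E := EuclideanSpace ℝ (Fin d) with hE
    set V : ℝ≥0∞ := volume (ball (0:E) 1) with hV
    have hV0 : 0 < V := measure_ball_pos _ _ one_pos
    have hVtop : V ≠ ⊤ := by rw [hV]; exact measure_ball_lt_top.ne
    have hVr : 0 < V.toReal := ENNReal.toReal_pos hV0.ne' hVtop
    refine ⟨7 ^ d * V.toReal, by positivity, ?_⟩
    intro X η κ s hX hη hκ hA hs
    set p : ℝ := (d:ℝ) - 1 with hp
    set r : ℝ := min (s/2) η with hrdef
    have hr : 0 < r := lt_min (by linarith) hη
    have hrη : r ≤ η := min_le_right _ _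
    have hrs : r ≤ s/2 := min_le_left _ _
    obtain ⟨u, uX, udisj, hcov⟩ :=
      Vitali.exists_disjoint_subfamily_covering_enlargement_closedBall X id (fun _ => r) r
        (fun a _ => le_rfl) 4 (by norm_num)
    -- points of u are 2r-separated
    have hsep : ∀ a ∈ u, ∀ b ∈ u, a ≠ b → 2 * r < dist a b := by
      intro a ha b hb hab
      by_contra hcon
      push_neg at hcon
      have hm1 : midpoint ℝ a b ∈ closedBall (id a) r := by
        simp only [id_eq, mem_closedBall]
        rw [dist_midpoint_left, Real.norm_two]
        linarith
      have hm2 : midpoint ℝ a b ∈ closedBall (id b) r := by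
        simp only [id_eq, mem_closedBall]
        rw [dist_midpoint_right, Real.norm_two]
        linarith
      exact Set.disjoint_left.1 (udisj ha hb hab) hm1 hm2
    -- u is finite
    obtain ⟨t, tX, tfin, tcov⟩ := hX.finite_cover_balls hr
    have ufin : u.Finite := by
      have hsub : ∀ c : E, (u ∩ ball c r).Subsingleton := by
        intro c a ⟨hau, hac⟩ b ⟨hbu, hbc⟩
        by_contra hab
        have h1 := hsep a hau b hbu hab
        have h2 : dist a b ≤ dist a c + dist c b := dist_triangle _ _ _
        rw [mem_ball] at hac hbc
        rw [dist_comm c b] at h2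
        linarith
      refine Set.Finite.subset (tfin.biUnion (fun c _ => (hsub c).finite)) ?_
      intro x hxu
      have hxX := uX hxu
      obtain ⟨c, hc, hxc⟩ := mem_iUnion₂.1 (tcov hxX)
      exact mem_biUnion hc ⟨hxu, hxc⟩
    -- covering of the neighborhood
    set R : ℝ := s + 4 * r with hRdef
    have hR0 : 0 ≤ R := by positivity
    have hXcov : X + ball (0:E) s ⊆ ⋃ b ∈ u, ball b R := by
      rintro y ⟨a, ha, q, hq, rfl⟩
      obtain ⟨b, hb, hsub⟩ := hcov a ha
      have hab : a ∈ closedBall (id b) (4 * r) := hsub (mem_closedBall_self hr.le)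
      simp only [id_eq, mem_closedBall] at hab
      refine mem_biUnion hb ?_
      rw [mem_ball]
      have h1 : dist (a + q) b ≤ dist (a + q) a + dist a b := dist_triangle _ _ _
      have h2 : dist (a + q) a = ‖q‖ := by simp [dist_eq_norm]
      have h3 : ‖q‖ < s := by simpa [mem_ball, dist_zero_right] using hq
      rw [h2] at h1
      calc dist (a + q) b ≤ ‖q‖ + dist a b := h1
        _ < s + 4 * r := by linarith
    -- volume of each ball
    have hballvol : ∀ b : E, volume (ball b R) = ENNReal.ofReal (R ^ d) * V := by
      intro b
      rw [Measure.addHaar_ball volume b hR0, finrank_euclideanSpace_fin]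
    -- Hausdorff measure lower bound summed
    set c1 : ℝ≥0∞ := ENNReal.ofReal (κ * r ^ p) with hc1
    have hc1_0 : c1 ≠ 0 := by
      refine (ENNReal.ofReal_pos.2 ?_).ne'
      have := Real.rpow_pos_of_pos hr p
      positivity
    have hc1_top : c1 ≠ ⊤ := ENNReal.ofReal_ne_top
    have hdisj2 : u.PairwiseDisjoint fun b => X ∩ ball b r := by
      intro a ha b hb hab
      exact (udisj ha hb hab).mono
        (inter_subset_right.trans ball_subset_closedBall)
        (inter_subset_right.trans ball_subset_closedBall)
    have hsum1 : ∑' _ : u, c1 ≤ μH[p] X := by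
      calc ∑' b : u, c1 ≤ ∑' b : u, μH[p] (X ∩ ball (b:E) r) :=
            ENNReal.tsum_le_tsum fun b => hA b (uX b.2) r hr hrη
        _ = μH[p] (⋃ b ∈ u, X ∩ ball b r) :=
            (measure_biUnion ufin.countable hdisj2
              (fun b _ => hX.measurableSet.inter measurableSet_ball)).symm
        _ ≤ μH[p] X := measure_mono (by
            refine iUnion₂_subset fun b _ => inter_subset_left)
    -- volume bound
    set c2 : ℝ≥0∞ := ENNReal.ofReal (R ^ d * V.toReal) with hc2def
    have hc2eq : ENNReal.ofReal (R ^ d) * V = c2 := by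
      rw [hc2def, ENNReal.ofReal_mul (by positivity), ENNReal.ofReal_toReal hVtop]
    have hvol : volume (X + ball (0:E) s) ≤ ∑' _ : u, c2 := by
      refine (measure_mono hXcov).trans ?_
      refine (measure_biUnion_le volume ufin.countable _).trans_eq ?_
      exact tsum_congr fun b => by rw [hballvol, hc2eq]
    set k : ℝ≥0∞ := c2 / c1 with hk
    have hc2k : c2 = k * c1 := (ENNReal.div_mul_cancel hc1_0 hc1_top).symm
    -- the key bound on k
    have hkey : k ≤ ENNReal.ofReal (7 ^ d * V.toReal / κ * s * (1 + s ^ p / η ^ p)) := by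
      rw [hk, ENNReal.div_le_iff hc1_0 hc1_top, hc1, ← ENNReal.ofReal_mul (by positivity)]
      refine ENNReal.ofReal_le_ofReal ?_
      have hkey2 : R ^ d ≤ 7 ^ d * (s * ((1 + s ^ p / η ^ p) * r ^ p)) := by
        have step1 : R ^ d ≤ (3 * s) ^ d :=
          pow_le_pow_left₀ hR0 (by rw [hRdef]; linarith) d
        have hsd : s ^ d = s * s ^ p := by
          rw [← Real.rpow_natCast s d, show (d:ℝ) = 1 + p by rw [hp]; ring,
            Real.rpow_add hs, Real.rpow_one]
        have step2 : (3 * s) ^ d = 3 ^ d * (s * s ^ p) := by rw [mul_pow, hsd]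
        have step3 : s * s ^ p ≤ 2 ^ (d:ℝ) * (s * ((1 + s ^ p / η ^ p) * r ^ p)) := by
          rw [hp, hrdef]
          exact key_real_aux d hd η s hη hs
        have h2d : (2:ℝ) ^ (d:ℝ) = 2 ^ d := by rw [Real.rpow_natCast]
        have hnn : (0:ℝ) ≤ s * ((1 + s ^ p / η ^ p) * r ^ p) := by
          have h1 : (0:ℝ) ≤ s ^ p / η ^ p := by positivity
          have h2 : (0:ℝ) ≤ r ^ p := (Real.rpow_pos_of_pos hr p).le
          positivity
        calc R ^ d ≤ 3 ^ d * (s * s ^ p) := step1.trans_eq step2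
          _ ≤ 3 ^ d * (2 ^ (d:ℝ) * (s * ((1 + s ^ p / η ^ p) * r ^ p))) := by
              exact mul_le_mul_of_nonneg_left step3 (by positivity)
          _ = 6 ^ d * (s * ((1 + s ^ p / η ^ p) * r ^ p)) := by
              rw [h2d]; ring_nf; rw [show (6:ℝ) ^ d = 3 ^ d * 2 ^ d by rw [← mul_pow]; norm_num]
              ring
          _ ≤ 7 ^ d * (s * ((1 + s ^ p / η ^ p) * r ^ p)) := by
              exact mul_le_mul_of_nonneg_right (pow_le_pow_left₀ (by norm_num) (by norm_num) d) hnn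
      have heq : 7 ^ d * V.toReal / κ * s * (1 + s ^ p / η ^ p) * (κ * r ^ p)
          = 7 ^ d * (s * ((1 + s ^ p / η ^ p) * r ^ p)) * V.toReal := by
        field_simp
      rw [heq]
      exact mul_le_mul_of_nonneg_right hkey2 hVr.le
    calc volume (X + ball (0:E) s) ≤ ∑' _ : u, c2 := hvol
      _ = ∑' _ : u, k * c1 := by rw [← hc2k]
      _ = k * ∑' _ : u, c1 := ENNReal.tsum_mul_left
      _ ≤ k * μH[p] X := by gcongr
      _ ≤ ENNReal.ofReal (7 ^ d * V.toReal / κ * s * (1 + s ^ p / η ^ p)) * μH[p] X :=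
          by gcongr
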